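/- Let n ≥ 3 be an integer. If there exist natural numbers a and b such that 2n² + 1 = 3^a and 8n - 7 = 3^b, then n = 11. -/
import Mathlib


theorem powers_of_three_force_eleven (n : ℕ) (hn : 3 ≤ n)
    (h : ∃ a b : ℕ, 2 * n ^ 2 + 1 = 3 ^ a ∧ 8 * n - 7 = 3 ^ b) : n = 11 := by
  obtain ⟨a, b, ha, hb⟩ := h
  have h8 : 8 * n = 3 ^ b + 7 := by omega
  -- a ≥ 5, else n ≤ 6 and no value works
  have ha5 : 5 ≤ a := by
    by_contra hlt
    push_neg at hlt
    have hle : 3 ^ a ≤ 3 ^ 4 := Nat.pow_le_pow_right (by norm_num) (by omega)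
    have hn6 : n ≤ 6 := by nlinarith
    interval_cases n <;> interval_cases a <;> norm_num at ha
  -- key identity
  have key : 32 * 3 ^ a = 3 ^ b * (8 * n + 7) + 81 := by
    have ha' : (3 ^ a : ℤ) = 2 * n ^ 2 + 1 := by exact_mod_cast ha.symm
    have hb' : (3 ^ b : ℤ) = 8 * n - 7 := by
      have : (3 ^ b : ℕ) + 7 = 8 * n := by omega
      have := congrArg (Nat.cast : ℕ → ℤ) this
      push_cast at this
      linarith
    have : (32 * 3 ^ a : ℤ) = 3 ^ b * (8 * n + 7) + 81 := by
      rw [ha', hb']; ring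
    exact_mod_cast this
  have hb4 : b ≤ 4 := by
    by_contra hlt
    push_neg at hlt
    have d1 : (3 : ℕ) ^ 5 ∣ 32 * 3 ^ a := Dvd.dvd.mul_left (pow_dvd_pow 3 ha5) 32
    have d2 : (3 : ℕ) ^ 5 ∣ 3 ^ b * (8 * n + 7) :=
      Dvd.dvd.mul_right (pow_dvd_pow 3 (by omega)) _
    have hsub : 32 * 3 ^ a - 3 ^ b * (8 * n + 7) = 81 := by omega
    have d3 : (3 : ℕ) ^ 5 ∣ 81 := hsub ▸ Nat.dvd_sub d1 d2
    norm_num at d3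
  have hb3 : 3 ≤ b := by
    by_contra hlt
    push_neg at hlt
    have : 3 ^ b ≤ 3 ^ 2 := Nat.pow_le_pow_right (by norm_num) (by omega)
    omega
  interval_cases b <;> norm_num at h8 <;> omega
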